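/- Assume ℵ₁ < 2^ℵ₀. Then there is a d-separable topological space X with d(X) = ℵ₁ such that X contains no dense subset of cardinality ℵ₁ that is a union of countably many discrete subspaces; i.e., every σ-discrete dense subset of X has cardinality greater than ℵ₁. -/

import Mathlib

open Cardinal Set

universe u

/-- A subset `D` of a topological space is closed discrete iff it is closed and
its subspace topology is discrete. -/
def ClosedDiscrete {X : Type u} [TopologicalSpace X] (D : Set X) : Prop :=
  IsClosed D ∧ DiscreteTopology D

/-- A space is `e`-separable iff it has a dense set which is a countable union of
closed discrete sets. -/
def ESeparable (X : Type u) [TopologicalSpace X] : Prop :=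
  ∃ D : ℕ → Set X, (∀ n, ClosedDiscrete (D n)) ∧ Dense (⋃ n, D n)

/-- The density of a space: the least cardinality of a dense subset. -/
noncomputable def density (X : Type u) [TopologicalSpace X] : Cardinal.{u} :=
  sInf {c | ∃ D : Set X, Dense D ∧ #D = c}

/-- The extent of a space: the supremum of the cardinalities of closed discrete subsets. -/
noncomputable def extent (X : Type u) [TopologicalSpace X] : Cardinal.{u} :=
  sSup {c | ∃ D : Set X, ClosedDiscrete D ∧ #D = c}

/-! ### auxiliary construction -/

def SSa : Type := Quotient.out (Cardinal.aleph 1 : Cardinal.{0})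

def TTa : Type := (ℕ → Bool) × ℕ

abbrev XXa : Type := SSa ⊕ TTa

lemma mk_SSa : #SSa = Cardinal.aleph 1 := Cardinal.mk_out _

def xopen (U : Set XXa) : Prop :=
  U = ∅ ∨ (({s : SSa | Sum.inl s ∉ U}.Countable) ∧
    ∃ n₀ : ℕ, #{t : TTa | Sum.inr t ∉ U ∧ n₀ ≤ t.2} ≤ Cardinal.aleph 1)

instance xtop : TopologicalSpace XXa where
  IsOpen := xopen
  isOpen_univ := by
    refine Or.inr ⟨by simp, 0, ?_⟩
    simp
  isOpen_inter := by
    rintro U V (rfl | ⟨hUS, nU, hUT⟩) hV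
    · exact Or.inl (by simp)
    rcases hV with rfl | ⟨hVS, nV, hVT⟩
    · exact Or.inl (by simp)
    refine Or.inr ⟨?_, max nU nV, ?_⟩
    · refine (hUS.union hVS).mono ?_
      intro s hs
      simp only [mem_setOf_eq, mem_inter_iff, not_and_or] at hs ⊢
      exact hs
    · have hsub : {t : TTa | Sum.inr t ∉ U ∩ V ∧ max nU nV ≤ t.2} ⊆
        {t : TTa | Sum.inr t ∉ U ∧ nU ≤ t.2} ∪ {t : TTa | Sum.inr t ∉ V ∧ nV ≤ t.2} := by
        intro t ht
        simp only [mem_setOf_eq, mem_inter_iff, not_and_or, mem_union] at ht ⊢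
        rcases ht with ⟨h1 | h1, h2⟩
        · exact Or.inl ⟨h1, le_trans (le_max_left _ _) h2⟩
        · exact Or.inr ⟨h1, le_trans (le_max_right _ _) h2⟩
      calc #{t : TTa | Sum.inr t ∉ U ∩ V ∧ max nU nV ≤ t.2}
          ≤ #({t : TTa | Sum.inr t ∉ U ∧ nU ≤ t.2} ∪ {t : TTa | Sum.inr t ∉ V ∧ nV ≤ t.2} : Set TTa) :=
            Cardinal.mk_le_mk_of_subset hsub
        _ ≤ #{t : TTa | Sum.inr t ∉ U ∧ nU ≤ t.2} + #{t : TTa | Sum.inr t ∉ V ∧ nV ≤ t.2} :=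
            Cardinal.mk_union_le _ _
        _ ≤ Cardinal.aleph 1 + Cardinal.aleph 1 := add_le_add hUT hVT
        _ = Cardinal.aleph 1 := Cardinal.add_eq_self (Cardinal.aleph0_le_aleph 1)
  isOpen_sUnion := by
    intro 𝒮 hall
    by_cases hne : ∃ U ∈ 𝒮, U ≠ ∅
    · obtain ⟨U, hU𝒮, hUne⟩ := hne
      rcases hall U hU𝒮 with rfl | ⟨hUS, nU, hUT⟩
      · exact absurd rfl hUne
      refine Or.inr ⟨hUS.mono ?_, nU, le_trans (Cardinal.mk_le_mk_of_subset ?_) hUT⟩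
      · intro s hs
        simp only [mem_setOf_eq, mem_sUnion, not_exists] at hs ⊢
        exact fun hU => hs U ⟨hU𝒮, hU⟩
      · intro t ht
        simp only [mem_setOf_eq, mem_sUnion, not_exists] at ht ⊢
        exact ⟨fun hU => ht.1 U ⟨hU𝒮, hU⟩, ht.2⟩
    · push_neg at hne
      have : ⋃₀ 𝒮 = ∅ := by
        apply sUnion_eq_empty.2
        intro U hU; exact hne U hU
      exact Or.inl this

lemma xopen_iff (U : Set XXa) : IsOpen U ↔ xopen U := Iff.rfl

lemma aleph0_le_a1 : (ℵ₀ : Cardinal.{0}) ≤ Cardinal.aleph 1 := Cardinal.aleph0_le_aleph 1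

instance : T1Space XXa := by
  constructor
  intro x
  rw [← isOpen_compl_iff, xopen_iff]
  refine Or.inr ⟨?_, 0, ?_⟩
  · have : {s : SSa | Sum.inl s ∉ ({x}ᶜ : Set XXa)} ⊆ {s | Sum.inl s = x} := by
      intro s hs; simpa using hs
    refine Set.Countable.mono this ?_
    apply Set.Subsingleton.countable
    intro a ha b hb
    exact Sum.inl_injective (ha.trans hb.symm)
  · have hsub : {t : TTa | Sum.inr t ∉ ({x}ᶜ : Set XXa) ∧ 0 ≤ t.2} ⊆ {t | Sum.inr t = x} := by
      intro t ht
      simp only [mem_setOf_eq, mem_compl_iff, mem_singleton_iff, not_not] at ht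
      exact ht.1
    have : ({t : TTa | Sum.inr t = x}).Subsingleton := by
      intro a ha b hb
      exact Sum.inr_injective (ha.trans hb.symm)
    calc #{t : TTa | Sum.inr t ∉ ({x}ᶜ : Set XXa) ∧ 0 ≤ t.2}
        ≤ #{t : TTa | Sum.inr t = x} := Cardinal.mk_le_mk_of_subset hsub
      _ ≤ ℵ₀ := (this.countable).le_aleph0
      _ ≤ Cardinal.aleph 1 := aleph0_le_a1

/-- key: if the S-part is countable and T-part has size ≤ ℵ₁ then not dense -/
lemma not_dense_small (E : Set XXa) (hS : {s : SSa | Sum.inl s ∈ E}.Countable)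
    (hT : #{t : TTa | Sum.inr t ∈ E} ≤ Cardinal.aleph 1) : ¬ Dense E := by
  intro hd
  have hopen : IsOpen Eᶜ := by
    rw [xopen_iff]
    refine Or.inr ⟨by simpa using hS, 0, ?_⟩
    refine le_trans (Cardinal.mk_le_mk_of_subset ?_) hT
    intro t ht
    simp only [mem_setOf_eq, mem_compl_iff, not_not] at ht ⊢
    exact ht.1
  have hne : (Eᶜ : Set XXa).Nonempty := by
    have : ∃ s : SSa, Sum.inl s ∉ E := by
      by_contra hc
      push_neg at hc
      have : ({s : SSa | Sum.inl s ∈ E}) = (Set.univ : Set SSa) := eq_univ_of_forall hc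
      have h2 : (univ : Set SSa).Countable := this ▸ hS
      have h3 : #SSa ≤ ℵ₀ := by
        have := h2.le_aleph0
        simpa using this
      rw [mk_SSa] at h3
      exact absurd (lt_of_lt_of_le Cardinal.aleph0_lt_aleph_one h3) (lt_irrefl _)
    obtain ⟨s, hs⟩ := this
    exact ⟨Sum.inl s, hs⟩
  have := (dense_iff_inter_open.1 hd) Eᶜ hopen hne
  obtain ⟨x, hx1, hx2⟩ := this
  exact hx1 hx2

lemma mk_sPart_le (E : Set XXa) : #{s : SSa | Sum.inl s ∈ E} ≤ #E :=
  Cardinal.mk_le_of_injective (f := fun s : {s : SSa | Sum.inl s ∈ E} => (⟨Sum.inl s.1, s.2⟩ : E))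
    (by intro a b hab; exact Subtype.ext (Sum.inl_injective (congrArg Subtype.val hab)))

lemma mk_tPart_le (E : Set XXa) : #{t : TTa | Sum.inr t ∈ E} ≤ #E :=
  Cardinal.mk_le_of_injective (f := fun t : {t : TTa | Sum.inr t ∈ E} => (⟨Sum.inr t.1, t.2⟩ : E))
    (by intro a b hab; exact Subtype.ext (Sum.inr_injective (congrArg Subtype.val hab)))

lemma dense_card_ge (E : Set XXa) (hd : Dense E) : Cardinal.aleph 1 ≤ #E := by
  by_contra hlt
  push_neg at hlt
  apply not_dense_small E ?_ ?_ hd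
  · rw [Cardinal.countable_iff_lt_aleph_one]
    exact lt_of_le_of_lt (mk_sPart_le E) hlt
  · exact le_of_lt (lt_of_le_of_lt (mk_tPart_le E) hlt)

lemma dense_inl_range : Dense (Set.range (Sum.inl : SSa → XXa) : Set XXa) := by
  rw [dense_iff_inter_open]
  intro U hU hUne
  rcases (xopen_iff U).1 hU with rfl | ⟨hUS, _, _⟩
  · exact absurd hUne (by simp)
  have : ∃ s : SSa, Sum.inl s ∈ U := by
    by_contra hc
    push_neg at hc
    have : ({s : SSa | Sum.inl s ∉ U}) = (Set.univ : Set SSa) := eq_univ_of_forall hc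
    have h2 : (univ : Set SSa).Countable := this ▸ hUS
    have h3 : #SSa ≤ ℵ₀ := by simpa using h2.le_aleph0
    rw [mk_SSa] at h3
    exact absurd (lt_of_lt_of_le Cardinal.aleph0_lt_aleph_one h3) (lt_irrefl _)
  obtain ⟨s, hs⟩ := this
  exact ⟨Sum.inl s, hs, ⟨s, rfl⟩⟩

lemma density_XXa : density XXa = Cardinal.aleph 1 := by
  apply le_antisymm
  · apply csInf_le (OrderBot.bddBelow _)
    refine ⟨Set.range (Sum.inl : SSa → XXa), dense_inl_range, ?_⟩
    rw [Cardinal.mk_range_eq _ Sum.inl_injective, mk_SSa]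
  · apply le_csInf
    · exact ⟨Cardinal.aleph 1, Set.range (Sum.inl : SSa → XXa), dense_inl_range, by
        rw [Cardinal.mk_range_eq _ Sum.inl_injective, mk_SSa]⟩
    · rintro c ⟨D, hD, rfl⟩
      exact dense_card_ge D hD

def Dn (n : ℕ) : Set XXa := {x | ∃ b : ℕ → Bool, x = Sum.inr (b, n)}

lemma Dn_discrete (n : ℕ) : DiscreteTopology ↥(Dn n) := by
  rw [discreteTopology_iff_isOpen_singleton]
  rintro ⟨x, hx⟩
  obtain ⟨b, rfl⟩ := hx
  rw [isOpen_induced_iff]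
  refine ⟨{x : XXa | ∀ t : TTa, x = Sum.inr t → (t.2 ≠ n ∨ t = (b, n))}, ?_, ?_⟩
  · rw [xopen_iff]
    refine Or.inr ⟨?_, n + 1, ?_⟩
    · have : {s : SSa | Sum.inl s ∉ {x : XXa | ∀ t : TTa, x = Sum.inr t → (t.2 ≠ n ∨ t = (b, n))}} = ∅ := by
        ext s
        simp only [mem_setOf_eq, mem_empty_iff_false, iff_false, not_not]
        intro t ht
        exact absurd ht (by simp)
      rw [this]; exact countable_empty
    · have : {t : TTa | Sum.inr t ∉ {x : XXa | ∀ t' : TTa, x = Sum.inr t' → (t'.2 ≠ n ∨ t' = (b, n))} ∧ n + 1 ≤ t.2} = ∅ := by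
        ext t
        simp only [mem_setOf_eq, mem_empty_iff_false, iff_false, not_and]
        intro ht hle
        apply ht
        intro t' ht'
        obtain rfl : t = t' := Sum.inr_injective ht'
        left
        omega
      rw [this]
      simp only [Cardinal.mk_emptyCollection]
      exact zero_le
  · ext ⟨y, hy⟩
    obtain ⟨b', rfl⟩ := hy
    simp only [mem_preimage, mem_setOf_eq, mem_singleton_iff, Subtype.mk.injEq]
    constructor
    · intro hy'
      rcases hy' (b', n) rfl with h | h
      · exact absurd rfl h
      · cases h; rfl
    · rintro h t ht
      have : (b', n) = t := Sum.inr_injective ht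
      subst this
      right
      exact Sum.inr_injective (congrArg Subtype.val h)

lemma Dn_union_dense (h : (Cardinal.aleph 1 : Cardinal.{0}) < 2 ^ ℵ₀) :
    Dense (⋃ n, Dn n) := by
  rw [dense_iff_inter_open]
  intro U hU hUne
  rcases (xopen_iff U).1 hU with rfl | ⟨_, n₀, hUT⟩
  · exact absurd hUne (by simp)
  have : ∃ b : ℕ → Bool, Sum.inr ((b, n₀) : TTa) ∈ U := by
    by_contra hc
    push_neg at hc
    have hinj : Function.Injective
        (fun b : ℕ → Bool => (⟨(b, n₀), ⟨hc b, le_refl n₀⟩⟩ :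
          {t : TTa | Sum.inr t ∉ U ∧ n₀ ≤ t.2})) := by
      intro a b hab
      have := congrArg (fun z => z.1.1) hab
      exact this
    have h1 : (2 : Cardinal.{0}) ^ ℵ₀ ≤ #{t : TTa | Sum.inr t ∉ U ∧ n₀ ≤ t.2} := by
      have := Cardinal.mk_le_of_injective hinj
      have harr : #(ℕ → Bool) = 2 ^ ℵ₀ := by
        rw [Cardinal.mk_arrow]
        simp
      rwa [harr] at this
    exact absurd (lt_of_lt_of_le h (le_trans h1 hUT)) (lt_irrefl _)
  obtain ⟨b, hb⟩ := this
  exact ⟨Sum.inr (b, n₀), hb, mem_iUnion.2 ⟨n₀, ⟨b, rfl⟩⟩⟩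

lemma sPart_countable_of_discrete (F : Set XXa) (hd : DiscreteTopology ↥F) :
    {s : SSa | Sum.inl s ∈ F}.Countable := by
  by_cases hne : {s : SSa | Sum.inl s ∈ F}.Nonempty
  · obtain ⟨s₀, hs₀⟩ := hne
    have hopen : IsOpen ({⟨Sum.inl s₀, hs₀⟩} : Set ↥F) := isOpen_discrete _
    rw [isOpen_induced_iff] at hopen
    obtain ⟨U, hU, hUeq⟩ := hopen
    rcases (xopen_iff U).1 hU with rfl | ⟨hUS, _, _⟩
    · exfalso
      have : (⟨Sum.inl s₀, hs₀⟩ : ↥F) ∈ (Subtype.val ⁻¹' (∅ : Set XXa)) := by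
        rw [hUeq]; rfl
      exact this
    · have : {s : SSa | Sum.inl s ∈ F} ⊆ {s : SSa | Sum.inl s ∉ U} ∪ {s₀} := by
        intro s hs
        by_cases hsu : Sum.inl s ∈ U
        · right
          have : (⟨Sum.inl s, hs⟩ : ↥F) ∈ (Subtype.val ⁻¹' U) := hsu
        
          rw [hUeq] at this
          have h2 : Sum.inl s = Sum.inl s₀ := congrArg Subtype.val this
          exact Sum.inl_injective h2
        · exact Or.inl hsu
      exact (hUS.union (countable_singleton s₀)).mono this
  · rw [Set.not_nonempty_iff_eq_empty] at hne
    rw [hne]; exact countable_empty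


/-- Assuming `ℵ₁ < 𝔠`, there is a `d`-separable `T₁` space `X` with `d(X) = ℵ₁`
such that every σ-discrete dense subset of `X` has cardinality greater than `ℵ₁`. -/
theorem exists_dSeparable_no_small_sigmaDiscrete_dense
    (h : (aleph 1 : Cardinal.{0}) < 2 ^ ℵ₀) :
    ∃ (X : Type) (_ : TopologicalSpace X), T1Space X ∧
      (∃ D : ℕ → Set X, (∀ n, DiscreteTopology ↥(D n)) ∧ Dense (⋃ n, D n)) ∧
      density X = aleph 1 ∧
      ∀ E : Set X, Dense E →
        (∃ F : ℕ → Set X, (∀ n, DiscreteTopology ↥(F n)) ∧ E = ⋃ n, F n) →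
        aleph 1 < #E := by
  refine ⟨XXa, xtop, inferInstance, ⟨Dn, Dn_discrete, Dn_union_dense h⟩, density_XXa, ?_⟩
  rintro E hE ⟨F, hF, rfl⟩
  by_contra hle
  push_neg at hle
  apply not_dense_small (⋃ n, F n) ?_ ?_ hE
  · have : {s : SSa | Sum.inl s ∈ ⋃ n, F n} = ⋃ n, {s : SSa | Sum.inl s ∈ F n} := by
      ext s; simp
    rw [this]
    exact Set.countable_iUnion (fun n => sPart_countable_of_discrete (F n) (hF n))
  · exact le_trans (mk_tPart_le _) hle
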